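/- Let D be a coherent integral domain that is not a field, Q its quotient field, E = ⊕_{i=1}^∞ Q/D (a countable direct sum of copies of the D-module Q/D), and R = D(+)E the idealization. Then: R is a φ-ring; R/Nil(R) is a coherent integral domain; and R is not nonnil-coherent (there is a finitely generated nonnil ideal of R that is not finitely presented). In fact, for any nonzero nonunit d ∈ D, the element (d,0) is non-nilpotent in R and the annihilator (0 :_R (d,0)) is not a finitely generated ideal of R. -/

import Mathlib

open DirectSum

universe u

/-- A ring is coherent if every finitely generated ideal is finitely presented. -/
def IsCoherentRing (S : Type*) [CommRing S] : Prop :=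
  ∀ I : Ideal S, I.FG → Module.FinitePresentation S I

/-- A commutative ring is a `φ`-ring if its nilradical is a divided prime ideal. -/
def IsPhiRing (R : Type*) [CommRing R] : Prop :=
  (nilradical R).IsPrime ∧ ∀ x : R, x ∉ nilradical R → nilradical R ≤ Ideal.span {x}

/-- A ring is nonnil-coherent if every finitely generated nonnil ideal is
finitely presented as a module. -/
def IsNonnilCoherent (R : Type*) [CommRing R] : Prop :=
  ∀ I : Ideal R, I.FG → ¬ I ≤ nilradical R → Module.FinitePresentation R I

variable (D : Type u) [CommRing D] [IsDomain D]

/-- The `D`-module `Q/D`, where `Q` is the quotient field of `D`. -/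
noncomputable abbrev QModD : Type u :=
  (FractionRing D) ⧸ (LinearMap.range (Algebra.linearMap D (FractionRing D)))

/-- The countable direct sum `E = ⊕_{i=1}^∞ Q/D`. -/
noncomputable abbrev EModD : Type u := ⨁ (_ : ℕ), QModD D

noncomputable instance : Module Dᵐᵒᵖ (EModD D) :=
  Module.compHom _ ((RingHom.id D).fromOpposite fun x y => Commute.all x y)

instance : IsCentralScalar D (EModD D) := ⟨fun _ _ => rfl⟩

noncomputable instance : CommRing (TrivSqZeroExt D (EModD D)) := inferInstance

/- ### Auxiliary lemmas -/

theorem isCoherentRing_of_ringEquiv {A B : Type*} [CommRing A] [CommRing B]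
    (e : A ≃+* B) (h : IsCoherentRing B) : IsCoherentRing A := by
  intro I hI
  obtain ⟨n, t, ht⟩ := Submodule.fg_iff_exists_fin_generating_family.mp hI
  have htI : ∀ i, t i ∈ I := fun i => ht ▸ Submodule.subset_span (Set.mem_range_self i)
  set J : Ideal B := I.map (e : A →+* B) with hJdef
  have hJ : J.FG := hI.map _
  have hfpJ : Module.FinitePresentation B J := h J hJ
  have htJ : ∀ i, e (t i) ∈ J := fun i => Ideal.mem_map_of_mem _ (htI i)
  let l : (Fin n → A) →ₗ[A] I :=
    { toFun := fun x => ⟨∑ i, x i * t i, Ideal.sum_mem _ fun i _ => I.mul_mem_left _ (htI i)⟩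
      map_add' := fun y z => Subtype.ext <| by
        simp [add_mul, Finset.sum_add_distrib]
      map_smul' := fun b y => Subtype.ext <| by
        simp [Finset.mul_sum, mul_assoc] }
  let l' : (Fin n → B) →ₗ[B] J :=
    { toFun := fun y => ⟨∑ i, y i * e (t i), Ideal.sum_mem _ fun i _ => J.mul_mem_left _ (htJ i)⟩
      map_add' := fun y z => Subtype.ext <| by
        simp [add_mul, Finset.sum_add_distrib]
      map_smul' := fun b y => Subtype.ext <| by
        simp [Finset.mul_sum, mul_assoc] }
  have hl : Function.Surjective l := by
    rintro ⟨x, hx⟩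
    rw [← ht] at hx
    obtain ⟨c, hc⟩ := (Submodule.mem_span_range_iff_exists_fun A).mp hx
    exact ⟨c, Subtype.ext (by simp only [smul_eq_mul] at hc; exact hc)⟩
  have hJspan : J = Ideal.span (Set.range fun i => e (t i)) := by
    have : I = Ideal.span (Set.range t) := ht.symm
    rw [hJdef, this, Ideal.map_span, ← Set.range_comp]
    rfl
  have hl' : Function.Surjective l' := by
    rintro ⟨x, hx⟩
    rw [hJspan] at hx
    obtain ⟨c, hc⟩ := (Submodule.mem_span_range_iff_exists_fun B).mp hx
    exact ⟨c, Subtype.ext (by simp only [smul_eq_mul] at hc; exact hc)⟩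
  haveI := hfpJ
  have kfg : (LinearMap.ker l').FG := Module.FinitePresentation.fg_ker l' hl'
  let σ : B →+* A := e.symm.toRingHom
  haveI : RingHomSurjective σ := ⟨e.symm.surjective⟩
  let g : (Fin n → B) →ₛₗ[σ] (Fin n → A) :=
    { toFun := fun y i => e.symm (y i)
      map_add' := fun y z => by ext i; simp
      map_smul' := fun b y => by ext i; simp [σ, smul_eq_mul, map_mul] }
  have hker : LinearMap.ker l = Submodule.map g (LinearMap.ker l') := by
    ext x
    simp only [Submodule.mem_map, LinearMap.mem_ker]
    constructor
    · intro hx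
      have hx' : ∑ i, x i * t i = 0 := congrArg Subtype.val hx
      refine ⟨fun i => e (x i), Subtype.ext ?_, funext fun i => e.symm_apply_apply _⟩
      show ∑ i, e (x i) * e (t i) = 0
      simp only [← map_mul, ← map_sum, hx', map_zero]
    · rintro ⟨y, hy, rfl⟩
      have hy' : ∑ i, y i * e (t i) = 0 := congrArg Subtype.val hy
      apply Subtype.ext
      show ∑ i, e.symm (y i) * t i = 0
      have : ∀ i, e.symm (y i) * t i = e.symm (y i * e (t i)) := fun i => by
        rw [map_mul, e.symm_apply_apply]
      rw [Finset.sum_congr rfl fun i _ => this i, ← map_sum, hy', map_zero]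
  have hkerfg : (LinearMap.ker l).FG := by
    obtain ⟨T, hT⟩ := kfg
    rw [hker, ← hT, Submodule.map_span]
    exact Submodule.fg_span ((T.finite_toSet).image _)
  exact Module.finitePresentation_of_free_of_surjective l hl hkerfg

theorem mem_nilradical_tsze_iff (x : TrivSqZeroExt D (EModD D)) :
    x ∈ nilradical (TrivSqZeroExt D (EModD D)) ↔ x.fst = 0 := by
  rw [mem_nilradical]
  constructor
  · intro hx
    have h2 : IsNilpotent x.fst := hx.map (TrivSqZeroExt.fstHom D D (EModD D))
    exact isNilpotent_iff_eq_zero.mp h2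
  · intro h
    refine ⟨2, ?_⟩
    have hx : x = TrivSqZeroExt.inr x.snd := by
      conv_lhs => rw [← TrivSqZeroExt.inl_fst_add_inr_snd_eq x]
      rw [h, TrivSqZeroExt.inl_zero, zero_add]
    rw [pow_two, hx, TrivSqZeroExt.inr_mul_inr]

theorem nilradical_tsze_eq :
    nilradical (TrivSqZeroExt D (EModD D)) =
      RingHom.ker (TrivSqZeroExt.fstHom D D (EModD D)).toRingHom := by
  ext x
  rw [mem_nilradical_tsze_iff, RingHom.mem_ker]
  rfl

theorem emodd_div (d : D) (hd : d ≠ 0) (f : EModD D) : ∃ m : EModD D, d • m = f := by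
  have hdQ : algebraMap D (FractionRing D) d ≠ 0 := by
    simpa [IsFractionRing.to_map_eq_zero_iff] using hd
  induction f using DirectSum.induction_on with
  | zero => exact ⟨0, smul_zero d⟩
  | of j q =>
    obtain ⟨u, rfl⟩ := Submodule.Quotient.mk_surjective _ q
    refine ⟨DirectSum.of _ j (Submodule.Quotient.mk ((algebraMap D (FractionRing D) d)⁻¹ * u)), ?_⟩
    rw [← DirectSum.of_smul, ← Submodule.Quotient.mk_smul,
      Algebra.smul_def, ← mul_assoc, mul_inv_cancel₀ hdQ, one_mul]
  | add x y hx hy =>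
    obtain ⟨mx, hmx⟩ := hx
    obtain ⟨my, hmy⟩ := hy
    exact ⟨mx + my, by rw [smul_add, hmx, hmy]⟩

theorem mem_ann_iff (d : D) (hd : d ≠ 0) (x : TrivSqZeroExt D (EModD D)) :
    x ∈ Submodule.colon (⊥ : Ideal (TrivSqZeroExt D (EModD D)))
        (Ideal.span {(TrivSqZeroExt.inl d : TrivSqZeroExt D (EModD D))}) ↔
      x * TrivSqZeroExt.inl d = 0 := by
  rw [Ideal.mem_colon_span_singleton, Ideal.mem_bot]

theorem ann_not_fg (d : D) (hd : d ≠ 0) (hdu : ¬ IsUnit d) :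
    ¬ (Submodule.colon (⊥ : Ideal (TrivSqZeroExt D (EModD D)))
        (Ideal.span {(TrivSqZeroExt.inl d : TrivSqZeroExt D (EModD D))})).FG := by
  classical
  rintro ⟨T, hT⟩
  obtain ⟨j, hj⟩ := Infinite.exists_notMem_finset
    (T.sup fun y => (TrivSqZeroExt.snd y).support)
  have hTj : ∀ y ∈ T, (TrivSqZeroExt.snd y) j = 0 := by
    intro y hyT
    by_contra hne
    have hsub : (TrivSqZeroExt.snd y).support ≤ T.sup fun y => (TrivSqZeroExt.snd y).support :=
      Finset.le_sup (f := fun y => (TrivSqZeroExt.snd y).support) hyT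
    rw [Finset.le_iff_subset] at hsub
    exact hj (hsub (DFinsupp.mem_support_iff.mpr hne))
  -- every element of the colon ideal annihilates `inl d`
  have hcolon : ∀ x : TrivSqZeroExt D (EModD D),
      x ∈ Submodule.colon (⊥ : Ideal (TrivSqZeroExt D (EModD D)))
        (Ideal.span {(TrivSqZeroExt.inl d : TrivSqZeroExt D (EModD D))}) →
        TrivSqZeroExt.fst x = 0 := by
    intro x hx
    rw [mem_ann_iff D d hd] at hx
    have := congrArg TrivSqZeroExt.fst hx
    rw [TrivSqZeroExt.fst_mul, TrivSqZeroExt.fst_inl, TrivSqZeroExt.fst_zero] at this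
    exact (mul_eq_zero.mp this).resolve_right hd
  -- key property of elements of the span
  have key : ∀ x ∈ Ideal.span (↑T : Set (TrivSqZeroExt D (EModD D))),
      TrivSqZeroExt.fst x = 0 ∧ (TrivSqZeroExt.snd x) j = 0 := by
    intro x hx
    refine Submodule.span_induction (fun y hy => ?_) (by simp) (fun a b _ _ ha hb => ?_)
      (fun a b _ hb => ?_) hx
    · refine ⟨hcolon y (hT ▸ Ideal.subset_span hy), hTj y hy⟩
    · exact ⟨by rw [TrivSqZeroExt.fst_add, ha.1, hb.1, add_zero],
        by rw [TrivSqZeroExt.snd_add, DFinsupp.add_apply, ha.2, hb.2, add_zero]⟩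
    · constructor
      · rw [smul_eq_mul, TrivSqZeroExt.fst_mul, hb.1, mul_zero]
      · rw [smul_eq_mul, TrivSqZeroExt.snd_mul, hb.1]
        show ((TrivSqZeroExt.fst a • TrivSqZeroExt.snd b
          + MulOpposite.op (0 : D) • TrivSqZeroExt.snd a : EModD D)) j = 0
        rw [MulOpposite.op_zero, zero_smul, add_zero, DFinsupp.smul_apply, hb.2, smul_zero]
  -- the witness element
  have hdQ : algebraMap D (FractionRing D) d ≠ 0 := by
    simpa [IsFractionRing.to_map_eq_zero_iff] using hd
  set q : QModD D := Submodule.Quotient.mk ((algebraMap D (FractionRing D) d)⁻¹) with hq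
  have hq0 : q ≠ 0 := by
    rw [hq, Ne, Submodule.Quotient.mk_eq_zero]
    rintro ⟨a, ha⟩
    apply hdu
    have ha' : algebraMap D (FractionRing D) a = (algebraMap D (FractionRing D) d)⁻¹ := ha
    have h1 : algebraMap D (FractionRing D) (d * a) = algebraMap D (FractionRing D) 1 := by
      rw [map_mul, ha', mul_inv_cancel₀ hdQ, map_one]
    have := IsFractionRing.injective D (FractionRing D) h1
    exact isUnit_iff_exists_inv.mpr ⟨a, this⟩
  have hdq : d • q = 0 := by
    rw [hq, ← Submodule.Quotient.mk_smul, Submodule.Quotient.mk_eq_zero]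
    refine ⟨1, ?_⟩
    show algebraMap D (FractionRing D) 1 = _
    rw [map_one, Algebra.smul_def, mul_inv_cancel₀ hdQ]
  set z : TrivSqZeroExt D (EModD D) :=
    TrivSqZeroExt.inr (DirectSum.of (fun _ : ℕ => QModD D) j q) with hzdef
  have hz : z ∈ Ideal.span (↑T : Set (TrivSqZeroExt D (EModD D))) := by
    rw [hT, mem_ann_iff D d hd, hzdef, TrivSqZeroExt.inr_mul_inl]
    rw [op_smul_eq_smul, ← DirectSum.of_smul, hdq, map_zero, TrivSqZeroExt.inr_zero]
  have := (key z hz).2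
  rw [hzdef, TrivSqZeroExt.snd_inr, DirectSum.of_eq_same] at this
  exact hq0 this

/- ### Main theorem -/

set_option maxHeartbeats 1000000 in
/-- Let `D` be a coherent domain that is not a field, `Q` its quotient
field, `E = ⊕_{i=1}^∞ Q/D` and `R = D(+)E` the idealization. Then `R` is a φ-ring,
`R/Nil(R)` is a coherent integral domain, `R` is not nonnil-coherent, and for every
nonzero nonunit `d ∈ D` the element `(d,0)` is non-nilpotent with non-finitely-generated
annihilator. -/
theorem idealization_of_coherent_domain_phiCoherent_not_nonnilCoherent
    (hcoh : IsCoherentRing D) (hnf : ¬ IsField D) :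
    IsPhiRing (TrivSqZeroExt D (EModD D)) ∧
      IsDomain ((TrivSqZeroExt D (EModD D)) ⧸ nilradical (TrivSqZeroExt D (EModD D))) ∧
      IsCoherentRing ((TrivSqZeroExt D (EModD D)) ⧸ nilradical (TrivSqZeroExt D (EModD D))) ∧
      ¬ IsNonnilCoherent (TrivSqZeroExt D (EModD D)) ∧
      ∀ d : D, d ≠ 0 → ¬ IsUnit d →
        (TrivSqZeroExt.inl d ∉ nilradical (TrivSqZeroExt D (EModD D)) ∧
          ¬ (Submodule.colon (⊥ : Ideal (TrivSqZeroExt D (EModD D)))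
              (Ideal.span {(TrivSqZeroExt.inl d : TrivSqZeroExt D (EModD D))})).FG) := by
  haveI hprime : (nilradical (TrivSqZeroExt D (EModD D))).IsPrime := by
    rw [nilradical_tsze_eq]
    exact RingHom.ker_isPrime _
  have hinl : ∀ d : D, d ≠ 0 →
      (TrivSqZeroExt.inl d : TrivSqZeroExt D (EModD D)) ∉
        nilradical (TrivSqZeroExt D (EModD D)) := by
    intro d hd h
    rw [mem_nilradical_tsze_iff, TrivSqZeroExt.fst_inl] at h
    exact hd h
  -- the quotient ring is isomorphic to D
  let e : (TrivSqZeroExt D (EModD D)) ⧸ nilradical (TrivSqZeroExt D (EModD D)) ≃+* D :=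
    (Ideal.quotEquivOfEq (nilradical_tsze_eq D)).trans
      (RingHom.quotientKerEquivOfSurjective
        (f := (TrivSqZeroExt.fstHom D D (EModD D)).toRingHom)
        (fun d => ⟨TrivSqZeroExt.inl d, rfl⟩))
  refine ⟨⟨hprime, ?_⟩, ?_, ?_, ?_, ?_⟩
  · -- divided
    intro x hx y hy
    rw [mem_nilradical_tsze_iff] at hy
    have hxf : TrivSqZeroExt.fst x ≠ 0 := fun h =>
      hx ((mem_nilradical_tsze_iff D x).mpr h)
    obtain ⟨m, hm⟩ := emodd_div D _ hxf (TrivSqZeroExt.snd y)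
    rw [Ideal.mem_span_singleton]
    refine ⟨TrivSqZeroExt.inr m, ?_⟩
    refine (TrivSqZeroExt.ext ?_ ?_).symm
    · rw [TrivSqZeroExt.fst_mul, TrivSqZeroExt.fst_inr, mul_zero, hy]
    · rw [TrivSqZeroExt.snd_mul, TrivSqZeroExt.snd_inr, TrivSqZeroExt.fst_inr]
      show TrivSqZeroExt.fst x • m + MulOpposite.op (0 : D) • TrivSqZeroExt.snd x =
        TrivSqZeroExt.snd y
      rw [MulOpposite.op_zero, zero_smul, add_zero, hm]
  · exact Ideal.Quotient.isDomain _
  · exact isCoherentRing_of_ringEquiv e hcoh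
  · -- not nonnil-coherent
    intro hnn
    obtain ⟨d, hd, hdu⟩ := Ring.exists_not_isUnit_of_not_isField hnf
    set I : Ideal (TrivSqZeroExt D (EModD D)) :=
      Ideal.span {(TrivSqZeroExt.inl d : TrivSqZeroExt D (EModD D))} with hIdef
    have hfg : I.FG := ⟨{TrivSqZeroExt.inl d}, by rw [Finset.coe_singleton, hIdef]⟩
    have hnonnil : ¬ I ≤ nilradical (TrivSqZeroExt D (EModD D)) := fun hle =>
      hinl d hd (hle (by rw [hIdef] at hle ⊢; exact Submodule.mem_span_singleton_self _))
    have hfp := hnn I hfg hnonnil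
    have hmemI : (TrivSqZeroExt.inl d : TrivSqZeroExt D (EModD D)) ∈ I := by
      rw [hIdef]
      exact Submodule.mem_span_singleton_self _
    let l : TrivSqZeroExt D (EModD D) →ₗ[TrivSqZeroExt D (EModD D)] I :=
      LinearMap.toSpanSingleton _ _ ⟨TrivSqZeroExt.inl d, hmemI⟩
    have lcoe : ∀ c : TrivSqZeroExt D (EModD D),
        ((l c : TrivSqZeroExt D (EModD D))) = c * TrivSqZeroExt.inl d := fun c => by
      rw [LinearMap.toSpanSingleton_apply, Submodule.coe_smul, smul_eq_mul]
    have hl : Function.Surjective l := by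
      rintro ⟨y, hy⟩
      rw [hIdef, Ideal.mem_span_singleton] at hy
      obtain ⟨c, hc⟩ := hy
      exact ⟨c, Subtype.ext (by rw [lcoe, mul_comm]; exact hc.symm)⟩
    haveI := hfp
    have hker : (LinearMap.ker l).FG := Module.FinitePresentation.fg_ker l hl
    have heq : Submodule.colon (⊥ : Ideal (TrivSqZeroExt D (EModD D))) I = LinearMap.ker l := by
      ext x
      rw [mem_ann_iff D d hd, LinearMap.mem_ker]
      constructor
      · intro hx
        exact Subtype.ext (by rw [lcoe, hx]; rfl)
      · intro hx
        have h2 := congrArg Subtype.val hx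
        rw [lcoe] at h2
        exact h2
    exact ann_not_fg D d hd hdu (heq ▸ hker)
  · intro d hd hdu
    exact ⟨hinl d hd, ann_not_fg D d hd hdu⟩
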